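/- arXiv:2311.05229 — 3 statements merged into one kernel-verified Lean document; each statement's English description precedes it below -/
import Mathlib

section
/- Let ρ : ℝ^d → ℝ be continuous, nonnegative, bounded, integrable and even (ρ(−x) = ρ(x)), let α ∈ (0,1), and let f : ℝ^d × ℝ → ℝ be continuous with α(s−s′) ≤ f(x,s) − f(x,s′) ≤ α⁻¹(s−s′) for all x ∈ ℝ^d and all s ≥ s′, and with sup_x |f(x,0)| < ∞. Define K(x,m) := ∫_{ℝ^d} ρ(x−z) f(z,(m∗ρ)(z)) dz. Then for all Borel probability measures m₁, m₂ on ℝ^d, ∫(K(x,m₁) − K(x,m₂)) d(m₁−m₂)(x) = ∫_{ℝ^d} (f(z,(m₁∗ρ)(z)) − f(z,(m₂∗ρ)(z))) ((m₁∗ρ)(z) − (m₂∗ρ)(z)) dz. -/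
open MeasureTheory

/-- Convolution of a (probability) measure with a kernel:
`(m∗ρ)(z) = ∫ ρ(z-y) dm(y)`. -/
noncomputable def measConv {d : ℕ} (ρ : EuclideanSpace ℝ (Fin d) → ℝ)
    (m : Measure (EuclideanSpace ℝ (Fin d))) (z : EuclideanSpace ℝ (Fin d)) : ℝ :=
  ∫ y, ρ (z - y) ∂m

/-- The regularized coupling `K(x,m) = ∫ ρ(x-z) f(z,(m∗ρ)(z)) dz`. -/
noncomputable def llCoupling {d : ℕ} (ρ : EuclideanSpace ℝ (Fin d) → ℝ)
    (f : EuclideanSpace ℝ (Fin d) → ℝ → ℝ)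
    (m : Measure (EuclideanSpace ℝ (Fin d))) (x : EuclideanSpace ℝ (Fin d)) : ℝ :=
  ∫ z, ρ (x - z) * f z (measConv ρ m z)

section Aux

variable {d : ℕ}

local notation "E" => EuclideanSpace ℝ (Fin d)

lemma measConv_continuous (ρ : E → ℝ) (hρc : Continuous ρ) {C : ℝ}
    (hρnn : ∀ x, 0 ≤ ρ x) (hC : ∀ x, ρ x ≤ C)
    (m : Measure E) [IsFiniteMeasure m] : Continuous (measConv ρ m) := by
  apply continuous_of_dominated (bound := fun _ => C)
  · intro z
    exact (hρc.comp (continuous_const.sub continuous_id)).aestronglyMeasurable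
  · intro z
    filter_upwards with y
    rw [Real.norm_eq_abs, abs_of_nonneg (hρnn _)]
    exact hC _
  · exact integrable_const C
  · filter_upwards with y
    exact hρc.comp (continuous_id.sub continuous_const)

lemma measConv_nonneg (ρ : E → ℝ) (hρnn : ∀ x, 0 ≤ ρ x)
    (m : Measure E) (z : E) : 0 ≤ measConv ρ m z :=
  integral_nonneg fun _ => hρnn _

lemma measConv_le (ρ : E → ℝ) (hρc : Continuous ρ) {C : ℝ}
    (hρnn : ∀ x, 0 ≤ ρ x) (hC : ∀ x, ρ x ≤ C)
    (m : Measure E) [IsProbabilityMeasure m] (z : E) : measConv ρ m z ≤ C := by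
  have hint : Integrable (fun y => ρ (z - y)) m := by
    refine (integrable_const C).mono'
      (hρc.comp (continuous_const.sub continuous_id)).aestronglyMeasurable ?_
    filter_upwards with y
    rw [Real.norm_eq_abs, abs_of_nonneg (hρnn _)]
    exact hC _
  calc measConv ρ m z ≤ ∫ _, C ∂m := integral_mono hint (integrable_const C) fun y => hC _
    _ = C := by simp

end Aux

/-- Fubini-type symmetrization identity:
`∫ (K(·,m₁)-K(·,m₂)) d(m₁-m₂) = ∫ (f(z,m₁∗ρ(z)) - f(z,m₂∗ρ(z))) (m₁∗ρ(z) - m₂∗ρ(z)) dz`. -/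
theorem llCoupling_symmetrization
    {d : ℕ} (ρ : EuclideanSpace ℝ (Fin d) → ℝ)
    (hρc : Continuous ρ) (hρnn : ∀ x, 0 ≤ ρ x) (hρb : ∃ C, ∀ x, ρ x ≤ C)
    (hρint : Integrable ρ) (hρeven : ∀ x, ρ (-x) = ρ x)
    (α : ℝ) (hα : α ∈ Set.Ioo (0 : ℝ) 1)
    (f : EuclideanSpace ℝ (Fin d) → ℝ → ℝ)
    (hfc : Continuous (Function.uncurry f))
    (hfmono : ∀ x s s', s' ≤ s →
      α * (s - s') ≤ f x s - f x s' ∧ f x s - f x s' ≤ α⁻¹ * (s - s'))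
    (hf0 : ∃ C, ∀ x, |f x 0| ≤ C)
    (m₁ m₂ : Measure (EuclideanSpace ℝ (Fin d)))
    [IsProbabilityMeasure m₁] [IsProbabilityMeasure m₂] :
    (∫ x, (llCoupling ρ f m₁ x - llCoupling ρ f m₂ x) ∂m₁)
      - (∫ x, (llCoupling ρ f m₁ x - llCoupling ρ f m₂ x) ∂m₂)
    = ∫ z, (f z (measConv ρ m₁ z) - f z (measConv ρ m₂ z))
        * (measConv ρ m₁ z - measConv ρ m₂ z) := by
  obtain ⟨C, hC⟩ := hρb
  obtain ⟨C₀, hC₀⟩ := hf0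
  have hα0 : 0 < α := hα.1
  have hαinv : 0 < α⁻¹ := inv_pos.mpr hα0
  -- Lipschitz bound on f in second variable
  have hflip : ∀ x s s', |f x s - f x s'| ≤ α⁻¹ * |s - s'| := by
    intro x s s'
    rcases le_total s' s with h | h
    · have := hfmono x s s' h
      rw [abs_of_nonneg (le_trans (mul_nonneg hα0.le (sub_nonneg.mpr h)) this.1),
        abs_of_nonneg (sub_nonneg.mpr h)]
      exact this.2
    · have := hfmono x s' s h
      rw [abs_sub_comm, abs_sub_comm s s',
        abs_of_nonneg (le_trans (mul_nonneg hα0.le (sub_nonneg.mpr h)) this.1),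
        abs_of_nonneg (sub_nonneg.mpr h)]
      exact this.2
  -- the difference function g
  set g : EuclideanSpace ℝ (Fin d) → ℝ :=
    fun z => f z (measConv ρ m₁ z) - f z (measConv ρ m₂ z) with hg
  have hconv₁c : Continuous (measConv ρ m₁) := measConv_continuous ρ hρc hρnn hC m₁
  have hconv₂c : Continuous (measConv ρ m₂) := measConv_continuous ρ hρc hρnn hC m₂
  have hfc' : ∀ (h : EuclideanSpace ℝ (Fin d) → ℝ), Continuous h →
      Continuous (fun z => f z (h z)) := fun h hh =>
    hfc.comp (continuous_id.prodMk hh)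
  have hgc : Continuous g :=
    ((hfc' _ hconv₁c).sub (hfc' _ hconv₂c))
  -- bound on g
  have hconvmem : ∀ (m : Measure (EuclideanSpace ℝ (Fin d))) [IsProbabilityMeasure m],
      ∀ z, |measConv ρ m z| ≤ C := by
    intro m _ z
    rw [abs_of_nonneg (measConv_nonneg ρ hρnn m z)]
    exact measConv_le ρ hρc hρnn hC m z
  have hgb : ∀ z, |g z| ≤ α⁻¹ * (2 * C) := by
    intro z
    calc |g z| ≤ α⁻¹ * |measConv ρ m₁ z - measConv ρ m₂ z| := hflip _ _ _
      _ ≤ α⁻¹ * (2 * C) := by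
        refine mul_le_mul_of_nonneg_left ?_ hαinv.le
        calc |measConv ρ m₁ z - measConv ρ m₂ z|
            ≤ |measConv ρ m₁ z| + |measConv ρ m₂ z| := abs_sub _ _
          _ ≤ C + C := add_le_add (hconvmem m₁ z) (hconvmem m₂ z)
          _ = 2 * C := by ring
  -- bound on f z (measConv ρ m z)
  have hfb : ∀ (m : Measure (EuclideanSpace ℝ (Fin d))) [IsProbabilityMeasure m],
      ∀ z, |f z (measConv ρ m z)| ≤ C₀ + α⁻¹ * C := by
    intro m _ z
    calc |f z (measConv ρ m z)|
        ≤ |f z (measConv ρ m z) - f z 0| + |f z 0| := by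
          simpa using abs_add_le (f z (measConv ρ m z) - f z 0) (f z 0)
      _ ≤ α⁻¹ * |measConv ρ m z - 0| + C₀ := add_le_add (hflip _ _ _) (hC₀ z)
      _ ≤ α⁻¹ * C + C₀ := by
          refine add_le_add_left (mul_le_mul_of_nonneg_left ?_ hαinv.le) C₀
          simpa using hconvmem m z
      _ = C₀ + α⁻¹ * C := by ring
  set M : ℝ := C₀ + α⁻¹ * C with hM
  have hMnn : 0 ≤ M := le_trans (abs_nonneg _) (hfb m₁ 0)
  -- integrability of z ↦ ρ(x-z) * h z  for bounded continuous h
  have key_int : ∀ (h : EuclideanSpace ℝ (Fin d) → ℝ) (B : ℝ), Continuous h →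
      (∀ z, |h z| ≤ B) → ∀ x : EuclideanSpace ℝ (Fin d),
      Integrable (fun z => ρ (x - z) * h z) := by
    intro h B hh hB x
    have hρx : Integrable (fun z => ρ (x - z)) := hρint.comp_sub_left x
    refine (hρx.const_mul B).mono'
      ((hρc.comp (continuous_const.sub continuous_id)).mul hh).aestronglyMeasurable ?_
    filter_upwards with z
    rw [Real.norm_eq_abs, abs_mul, abs_of_nonneg (hρnn _)]
    have hB0 : 0 ≤ B := le_trans (abs_nonneg _) (hB z)
    calc ρ (x - z) * |h z| ≤ ρ (x - z) * B :=
        mul_le_mul_of_nonneg_left (hB z) (hρnn _)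
      _ ≤ B * ρ (x - z) := by ring_nf; exact le_refl _
  -- K(x,m₁) - K(x,m₂) = ∫ z, ρ(x-z) * g z
  have hKdiff : ∀ x, llCoupling ρ f m₁ x - llCoupling ρ f m₂ x
      = ∫ z, ρ (x - z) * g z := by
    intro x
    rw [llCoupling, llCoupling, ← integral_sub
      (key_int _ M (hfc' _ hconv₁c) (hfb m₁) x)
      (key_int _ M (hfc' _ hconv₂c) (hfb m₂) x)]
    congr 1
    ext z
    rw [hg]
    ring
  -- integrability on the product
  have hprod : ∀ (m : Measure (EuclideanSpace ℝ (Fin d))) [IsProbabilityMeasure m],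
      Integrable (Function.uncurry fun x z => ρ (x - z) * g z) (m.prod volume) := by
    intro m _
    have hmeas : AEStronglyMeasurable (Function.uncurry fun x z => ρ (x - z) * g z)
        (m.prod volume) := by
      apply Continuous.aestronglyMeasurable
      exact (hρc.comp (continuous_fst.sub continuous_snd)).mul (hgc.comp continuous_snd)
    rw [integrable_prod_iff hmeas]
    constructor
    · filter_upwards with x
      exact key_int g (α⁻¹ * (2 * C)) hgc hgb x
    · refine (integrable_const ((α⁻¹ * (2 * C)) * ∫ z, ρ z)).mono'
        hmeas.norm.integral_prod_right' ?_
      filter_upwards with x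
      rw [Real.norm_eq_abs]
      have h1 : ∀ z, ‖ρ (x - z) * g z‖ ≤ (α⁻¹ * (2 * C)) * ρ (x - z) := by
        intro z
        rw [Real.norm_eq_abs, abs_mul, abs_of_nonneg (hρnn _)]
        calc ρ (x - z) * |g z| ≤ ρ (x - z) * (α⁻¹ * (2 * C)) :=
            mul_le_mul_of_nonneg_left (hgb z) (hρnn _)
          _ = (α⁻¹ * (2 * C)) * ρ (x - z) := by ring
      have h2 : Integrable (fun z => ρ (x - z)) := hρint.comp_sub_left x
      have h3 : Integrable (fun z => ‖ρ (x - z) * g z‖) :=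
        (key_int g (α⁻¹ * (2 * C)) hgc hgb x).norm
      calc |∫ z, ‖ρ (x - z) * g z‖|
          = ∫ z, ‖ρ (x - z) * g z‖ := abs_of_nonneg (integral_nonneg fun z => norm_nonneg _)
        _ ≤ ∫ z, (α⁻¹ * (2 * C)) * ρ (x - z) := integral_mono h3 (h2.const_mul _) h1
        _ = (α⁻¹ * (2 * C)) * ∫ z, ρ (x - z) := integral_const_mul _ _
        _ = (α⁻¹ * (2 * C)) * ∫ z, ρ z := by rw [integral_sub_left_eq_self]
  -- the inner integral after swapping
  have hinner : ∀ (m : Measure (EuclideanSpace ℝ (Fin d))) [IsProbabilityMeasure m],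
      ∀ z, (∫ x, ρ (x - z) * g z ∂m) = g z * measConv ρ m z := by
    intro m _ z
    rw [integral_mul_const]
    rw [mul_comm]
    congr 1
    rw [measConv]
    congr 1
    ext x
    rw [← hρeven (z - x), neg_sub]
  -- integrability of z ↦ g z * measConv ρ m z
  have hint_conv : ∀ (m : Measure (EuclideanSpace ℝ (Fin d))) [IsProbabilityMeasure m],
      Integrable (fun z => g z * measConv ρ m z) := by
    intro m _
    have := (hprod m).integral_prod_right
    refine this.congr ?_
    filter_upwards with z
    exact hinner m z
  -- swap integrals
  have hswap : ∀ (m : Measure (EuclideanSpace ℝ (Fin d))) [IsProbabilityMeasure m],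
      (∫ x, (llCoupling ρ f m₁ x - llCoupling ρ f m₂ x) ∂m)
      = ∫ z, g z * measConv ρ m z := by
    intro m _
    calc (∫ x, (llCoupling ρ f m₁ x - llCoupling ρ f m₂ x) ∂m)
        = ∫ x, ∫ z, ρ (x - z) * g z ∂(volume) ∂m := by
          congr 1; ext x; exact hKdiff x
      _ = ∫ z, ∫ x, ρ (x - z) * g z ∂m ∂(volume) := integral_integral_swap (hprod m)
      _ = ∫ z, g z * measConv ρ m z := by
          congr 1; ext z; exact hinner m z
  rw [hswap m₁, hswap m₂, ← integral_sub (hint_conv m₁) (hint_conv m₂)]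
  congr 1
  ext z
  rw [hg]
  ring
end

section
/- Let ρ : ℝ^d → ℝ be continuous, nonnegative, bounded, integrable and even (ρ(−x) = ρ(x)), not identically zero. Let α ∈ (0,1) and let f : ℝ^d × ℝ → ℝ be continuous with α(s−s′) ≤ f(x,s) − f(x,s′) ≤ α⁻¹(s−s′) for all x ∈ ℝ^d and all s ≥ s′, and with sup_x |f(x,0)| < ∞. Define K(x,m) := ∫_{ℝ^d} ρ(x−z) f(z,(m∗ρ)(z)) dz. Then K is strongly monotone: for all Borel probability measures m₁, m₂ on ℝ^d, ∫(K(x,m₁) − K(x,m₂)) d(m₁−m₂)(x) ≥ (α/‖ρ‖²_{L¹}) ∫_{ℝ^d} (K(x,m₁) − K(x,m₂))² dx. -/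
open MeasureTheory

lemma weighted_cauchy_schwarz {X : Type*} [MeasurableSpace X] {μ : Measure X}
    {w g : X → ℝ} (hw : ∀ a, 0 ≤ w a) (hwint : Integrable w μ)
    (hwg : Integrable (fun a => w a * g a) μ)
    (hwg2 : Integrable (fun a => w a * g a ^ 2) μ) :
    (∫ a, w a * g a ∂μ) ^ 2 ≤ (∫ a, w a ∂μ) * ∫ a, w a * g a ^ 2 ∂μ := by
  set A := ∫ a, w a ∂μ with hA
  set B := ∫ a, w a * g a ∂μ with hB
  set C := ∫ a, w a * g a ^ 2 ∂μ with hC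
  have key : ∀ t : ℝ, 0 ≤ A * (t * t) + (-2 * B) * t + C := by
    intro t
    have h0 : 0 ≤ ∫ a, w a * (g a - t) ^ 2 ∂μ :=
      integral_nonneg fun a => mul_nonneg (hw a) (sq_nonneg _)
    have he : ∫ a, w a * (g a - t) ^ 2 ∂μ = C - (2 * t) * B + (t * t) * A := by
      have hfun : (fun a => w a * (g a - t) ^ 2)
          = fun a => (w a * g a ^ 2 - (2 * t) * (w a * g a)) + (t * t) * w a := by
        funext a; ring
      have i1 : Integrable (fun a => w a * g a ^ 2 - 2 * t * (w a * g a)) μ :=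
        hwg2.sub (hwg.const_mul _)
      have i2 : Integrable (fun a => t * t * w a) μ := hwint.const_mul _
      rw [hfun, integral_add i1 i2, integral_sub hwg2 (hwg.const_mul _),
        integral_const_mul, integral_const_mul]
    nlinarith [h0, he]
  have hd := discrim_le_zero key
  rw [discrim] at hd
  nlinarith [hd]

/-- The classical Lasry–Lions coupling `K(x,m) = (f(·, m∗ρ(·)))∗ρ` is strongly monotone
with constant `α/‖ρ‖²_{L¹}`. -/
theorem llCoupling_strongly_monotone
    {d : ℕ} (ρ : EuclideanSpace ℝ (Fin d) → ℝ)
    (hρc : Continuous ρ) (hρnn : ∀ x, 0 ≤ ρ x) (hρb : ∃ C, ∀ x, ρ x ≤ C)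
    (hρint : Integrable ρ) (hρeven : ∀ x, ρ (-x) = ρ x)
    (hρne : ∃ x, ρ x ≠ 0)
    (α : ℝ) (hα : α ∈ Set.Ioo (0 : ℝ) 1)
    (f : EuclideanSpace ℝ (Fin d) → ℝ → ℝ)
    (hfc : Continuous (Function.uncurry f))
    (hfmono : ∀ x s s', s' ≤ s →
      α * (s - s') ≤ f x s - f x s' ∧ f x s - f x s' ≤ α⁻¹ * (s - s'))
    (hf0 : ∃ C, ∀ x, |f x 0| ≤ C)
    (m₁ m₂ : Measure (EuclideanSpace ℝ (Fin d)))
    [IsProbabilityMeasure m₁] [IsProbabilityMeasure m₂] :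
    (α / (∫ x, ρ x) ^ 2) * ∫ x, (llCoupling ρ f m₁ x - llCoupling ρ f m₂ x) ^ 2
      ≤ (∫ x, (llCoupling ρ f m₁ x - llCoupling ρ f m₂ x) ∂m₁)
        - (∫ x, (llCoupling ρ f m₁ x - llCoupling ρ f m₂ x) ∂m₂) := by
  obtain ⟨hα0, hα1⟩ := hα
  obtain ⟨C, hC⟩ := hρb
  obtain ⟨C0, hC0⟩ := hf0
  have hCnn : 0 ≤ C := le_trans (hρnn 0) (hC 0)
  have hαinn : 0 ≤ α⁻¹ := inv_nonneg.mpr hα0.le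
  -- evenness
  have hsymm : ∀ x z : EuclideanSpace ℝ (Fin d), ρ (x - z) = ρ (z - x) := fun x z => by
    rw [← neg_sub z x, hρeven]
  -- translates of ρ
  have hρtr : ∀ x : EuclideanSpace ℝ (Fin d), Integrable (fun z => ρ (x - z)) volume :=
    fun x => hρint.comp_sub_left x
  have hρtr' : ∀ z : EuclideanSpace ℝ (Fin d), Integrable (fun x => ρ (x - z)) volume :=
    fun z => hρint.comp_sub_right z
  have hρtri : ∀ z : EuclideanSpace ℝ (Fin d), ∫ x, ρ (x - z) = ∫ x, ρ x :=
    fun z => integral_sub_right_eq_self ρ z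
  have hρtri' : ∀ x : EuclideanSpace ℝ (Fin d), (∫ z, ρ (x - z)) = ∫ x, ρ x := fun x =>
    integral_sub_left_eq_self ρ volume x
  -- basic facts about measConv for probability measures
  have hconv_facts : ∀ (m : Measure (EuclideanSpace ℝ (Fin d))), IsProbabilityMeasure m →
      (∀ z, 0 ≤ measConv ρ m z) ∧ (∀ z, measConv ρ m z ≤ C) ∧
      Continuous (measConv ρ m) ∧ Integrable (measConv ρ m) volume := by
    intro m hm
    haveI := hm
    have hsec : ∀ z, Integrable (fun y => ρ (z - y)) m := by
      intro z
      refine Integrable.mono' (integrable_const C)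
        ((hρc.comp (continuous_const.sub continuous_id)).aestronglyMeasurable) ?_
      filter_upwards with y
      rw [Real.norm_eq_abs, abs_of_nonneg (hρnn _)]
      exact hC _
    refine ⟨fun z => integral_nonneg fun y => hρnn _, fun z => ?_, ?_, ?_⟩
    · calc measConv ρ m z ≤ ∫ _, C ∂m := integral_mono (hsec z) (integrable_const C)
            (fun y => hC _)
        _ = C := by simp
    · refine continuous_of_dominated
        (fun z => (hρc.comp (continuous_const.sub continuous_id)).aestronglyMeasurable)
        (fun z => ?_) (integrable_const C) ?_
      · filter_upwards with y
        rw [Real.norm_eq_abs, abs_of_nonneg (hρnn _)]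
        exact hC _
      · filter_upwards with y
        exact hρc.comp (continuous_id.sub continuous_const)
    · have hFm : AEStronglyMeasurable (fun p : EuclideanSpace ℝ (Fin d) × EuclideanSpace ℝ (Fin d) => ρ (p.1 - p.2)) (volume.prod m) :=
        (hρc.comp (continuous_fst.sub continuous_snd)).aestronglyMeasurable
      have hFint : Integrable (fun p : EuclideanSpace ℝ (Fin d) × EuclideanSpace ℝ (Fin d) => ρ (p.1 - p.2)) (volume.prod m) := by
        rw [integrable_prod_iff' hFm]
        constructor
        · filter_upwards with y
          exact hρint.comp_sub_right y
        · refine Integrable.mono' (integrable_const (∫ x, ρ x))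
            (((hρc.comp (continuous_fst.sub continuous_snd)).stronglyMeasurable.norm.integral_prod_left').aestronglyMeasurable) ?_
          filter_upwards with y
          have h1 : ∫ x, ‖ρ (x - y)‖ = ∫ x, ρ x := by
            simp_rw [Real.norm_eq_abs, fun x => abs_of_nonneg (hρnn (x - y))]
            exact hρtri y
          rw [Real.norm_eq_abs, h1, abs_of_nonneg (integral_nonneg hρnn)]
      exact hFint.integral_prod_left
  obtain ⟨hu₁nn, hu₁C, hu₁cont, hu₁int⟩ := hconv_facts m₁ inferInstance
  obtain ⟨hu₂nn, hu₂C, hu₂cont, hu₂int⟩ := hconv_facts m₂ inferInstance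
  -- the difference function g
  set g : EuclideanSpace ℝ (Fin d) → ℝ :=
    fun z => f z (measConv ρ m₁ z) - f z (measConv ρ m₂ z) with hgdef
  have hgcont : Continuous g :=
    (hfc.comp (continuous_id.prodMk hu₁cont)).sub (hfc.comp (continuous_id.prodMk hu₂cont))
  have hgm : AEStronglyMeasurable g volume := hgcont.aestronglyMeasurable
  -- Lipschitz-type bound on f
  have habs : ∀ x (s s' : ℝ), |f x s - f x s'| ≤ α⁻¹ * |s - s'| := by
    have main : ∀ x (s s' : ℝ), s' ≤ s → |f x s - f x s'| ≤ α⁻¹ * (s - s') := by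
      intro x s s' h
      obtain ⟨h1, h2⟩ := hfmono x s s' h
      rw [abs_of_nonneg (by nlinarith : (0:ℝ) ≤ f x s - f x s')]
      exact h2
    intro x s s'
    rcases le_total s' s with h | h
    · rw [abs_of_nonneg (by linarith : (0:ℝ) ≤ s - s')]
      exact main x s s' h
    · rw [abs_sub_comm, abs_of_nonpos (by linarith : s - s' ≤ 0)]
      have := main x s' s h
      calc |f x s' - f x s| ≤ α⁻¹ * (s' - s) := this
        _ = α⁻¹ * -(s - s') := by ring
    -- key monotonicity inequality
  have hkey : ∀ x (s s' : ℝ), α * (f x s - f x s') ^ 2 ≤ (f x s - f x s') * (s - s') := by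
    have main : ∀ x (s s' : ℝ), s' ≤ s → α * (f x s - f x s') ^ 2 ≤ (f x s - f x s') * (s - s') := by
      intro x s s' h
      obtain ⟨h1, h2⟩ := hfmono x s s' h
      have hD0 : 0 ≤ f x s - f x s' := by nlinarith
      have h3 : α * (f x s - f x s') ≤ s - s' := by
        have := mul_le_mul_of_nonneg_left h2 hα0.le
        rwa [← mul_assoc, mul_inv_cancel₀ (ne_of_gt hα0), one_mul] at this
      nlinarith [hD0, h3]
    intro x s s'
    rcases le_total s' s with h | h
    · exact main x s s' h
    · nlinarith [main x s' s h]
  -- bounds on g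
  have hdiffC : ∀ z, |measConv ρ m₁ z - measConv ρ m₂ z| ≤ C := by
    intro z
    rw [abs_le]
    constructor <;> [linarith [hu₁nn z, hu₂C z]; linarith [hu₂nn z, hu₁C z]]
  have hgb : ∀ z, |g z| ≤ α⁻¹ * C := by
    intro z
    calc |g z| ≤ α⁻¹ * |measConv ρ m₁ z - measConv ρ m₂ z| := habs z _ _
      _ ≤ α⁻¹ * C := mul_le_mul_of_nonneg_left (hdiffC z) hαinn
  have hgbN : ∃ B, ∀ z, ‖g z‖ ≤ B := ⟨α⁻¹ * C, fun z => by rw [Real.norm_eq_abs]; exact hgb z⟩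
  -- integrability of g and g²
  have hgint : Integrable g volume := by
    refine Integrable.mono' ((hu₁int.add hu₂int).const_mul α⁻¹) hgm ?_
    filter_upwards with z
    have habs2 : |measConv ρ m₁ z - measConv ρ m₂ z| ≤ measConv ρ m₁ z + measConv ρ m₂ z := by
      rw [abs_le]; constructor <;> [linarith [hu₁nn z, hu₂nn z]; linarith [hu₂nn z, hu₁nn z]]
    rw [Real.norm_eq_abs]
    calc |g z| ≤ α⁻¹ * |measConv ρ m₁ z - measConv ρ m₂ z| := habs z _ _
      _ ≤ α⁻¹ * (measConv ρ m₁ z + measConv ρ m₂ z) :=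
        mul_le_mul_of_nonneg_left habs2 hαinn
  have hg2int : Integrable (fun z => g z ^ 2) volume := by
    refine Integrable.mono' (hgint.abs.const_mul (α⁻¹ * C))
      ((hgcont.pow 2).aestronglyMeasurable) ?_
    filter_upwards with z
    rw [Real.norm_eq_abs]
    nlinarith [hgb z, abs_nonneg (g z), sq_abs (g z), abs_of_nonneg (sq_nonneg (g z))]
  have hg2bN : ∃ B, ∀ z, ‖g z ^ 2‖ ≤ B := by
    refine ⟨(α⁻¹ * C) ^ 2, fun z => ?_⟩
    rw [Real.norm_eq_abs]
    nlinarith [hgb z, abs_nonneg (g z), sq_abs (g z), abs_of_nonneg (sq_nonneg (g z))]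
  -- boundedness of z ↦ f z (measConv ρ m z)
  have hfb : ∀ (m : Measure (EuclideanSpace ℝ (Fin d))), (∀ z, 0 ≤ measConv ρ m z) →
      (∀ z, measConv ρ m z ≤ C) → ∀ z, ‖f z (measConv ρ m z)‖ ≤ C0 + α⁻¹ * C := by
    intro m hnn hCm z
    have h1 := habs z (measConv ρ m z) 0
    rw [sub_zero, abs_of_nonneg (hnn z)] at h1
    have h2 : |f z (measConv ρ m z)| - |f z 0| ≤ |f z (measConv ρ m z) - f z 0| :=
      abs_sub_abs_le_abs_sub _ _
    have h3 : α⁻¹ * measConv ρ m z ≤ α⁻¹ * C := mul_le_mul_of_nonneg_left (hCm z) hαinn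
    rw [Real.norm_eq_abs]
    linarith [hC0 z]
  -- integrability of the coupling integrand
  have hint : ∀ (m : Measure (EuclideanSpace ℝ (Fin d))) (hm : IsProbabilityMeasure m)
      (hnn : ∀ z, 0 ≤ measConv ρ m z) (hCm : ∀ z, measConv ρ m z ≤ C)
      (hcont : Continuous (measConv ρ m)) (x : EuclideanSpace ℝ (Fin d)),
      Integrable (fun z => ρ (x - z) * f z (measConv ρ m z)) volume := by
    intro m hm hnn hCm hcont x
    have := (hρtr x).bdd_mul
      ((hfc.comp (continuous_id.prodMk hcont)).aestronglyMeasurable)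
      (Filter.Eventually.of_forall (hfb m hnn hCm))
    simpa [mul_comm] using this
  -- pointwise representation of the difference of couplings
  have hKrep : ∀ x, llCoupling ρ f m₁ x - llCoupling ρ f m₂ x = ∫ z, ρ (x - z) * g z := by
    intro x
    rw [llCoupling, llCoupling,
      ← integral_sub (hint m₁ inferInstance hu₁nn hu₁C hu₁cont x)
        (hint m₂ inferInstance hu₂nn hu₂C hu₂cont x)]
    congr 1
    funext z
    rw [hgdef]
    ring
  -- integrability of sections z ↦ ρ (x - z) * g z and with g²
  have hsecg : ∀ x, Integrable (fun z => ρ (x - z) * g z) volume := by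
    intro x
    have := (hρtr x).bdd_mul hgm (Filter.Eventually.of_forall hgbN.choose_spec)
    simpa [mul_comm] using this
  have hsecg2 : ∀ x, Integrable (fun z => ρ (x - z) * g z ^ 2) volume := by
    intro x
    have := (hρtr x).bdd_mul ((hgcont.pow 2).aestronglyMeasurable) (Filter.Eventually.of_forall hg2bN.choose_spec)
    simpa [mul_comm] using this
  -- Fubini for the measure pairing
  have hF1 : ∀ (m : Measure (EuclideanSpace ℝ (Fin d))), IsProbabilityMeasure m →
      ∫ x, (∫ z, ρ (x - z) * g z) ∂m = ∫ z, g z * measConv ρ m z := by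
    intro m hm
    haveI := hm
    have hGc : Continuous (Function.uncurry fun (x z : EuclideanSpace ℝ (Fin d)) => ρ (x - z) * g z) :=
      (hρc.comp (continuous_fst.sub continuous_snd)).mul (hgcont.comp continuous_snd)
    have hGint : Integrable (Function.uncurry fun (x z : EuclideanSpace ℝ (Fin d)) => ρ (x - z) * g z) (m.prod volume) := by
      rw [integrable_prod_iff hGc.aestronglyMeasurable]
      constructor
      · filter_upwards with x
        exact hsecg x
      · refine Integrable.mono' (integrable_const ((α⁻¹ * C) * ∫ x, ρ x))
          ((hGc.stronglyMeasurable.norm.integral_prod_right').aestronglyMeasurable) ?_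
        filter_upwards with x
        have hb1 : ∫ z, ‖ρ (x - z) * g z‖ ≤ ∫ z, (α⁻¹ * C) * ρ (x - z) := by
          refine integral_mono (hsecg x).norm ((hρtr x).const_mul _) fun z => ?_
          rw [Real.norm_eq_abs, abs_mul, abs_of_nonneg (hρnn _)]
          calc ρ (x - z) * |g z| ≤ ρ (x - z) * (α⁻¹ * C) :=
              mul_le_mul_of_nonneg_left (hgb z) (hρnn _)
            _ = (α⁻¹ * C) * ρ (x - z) := by ring
        rw [Real.norm_eq_abs, abs_of_nonneg (integral_nonneg fun z => norm_nonneg _)]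
        calc (∫ z, ‖ρ (x - z) * g z‖) ≤ ∫ z, (α⁻¹ * C) * ρ (x - z) := hb1
          _ = (α⁻¹ * C) * ∫ z, ρ (x - z) := integral_const_mul _ _
          _ = (α⁻¹ * C) * ∫ x, ρ x := by rw [hρtri' x]
    rw [integral_integral_swap hGint]
    refine integral_congr_ae (Filter.Eventually.of_forall fun z => ?_)
    show (∫ x, ρ (x - z) * g z ∂m) = g z * measConv ρ m z
    rw [integral_mul_const]
    have hrepr : (∫ x, ρ (x - z) ∂m) = measConv ρ m z := by
      rw [measConv]
      refine integral_congr_ae (Filter.Eventually.of_forall fun x => ?_)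
      exact hsymm x z
    rw [hrepr, mul_comm]
  -- integrability of g * measConv
  have hgu : ∀ (m : Measure (EuclideanSpace ℝ (Fin d))), Integrable (measConv ρ m) volume →
      Integrable (fun z => g z * measConv ρ m z) volume := by
    intro m hui
    exact hui.bdd_mul hgm (Filter.Eventually.of_forall hgbN.choose_spec)
  -- the RHS equals ∫ g (u₁ - u₂)
  have hRHS : (∫ x, (llCoupling ρ f m₁ x - llCoupling ρ f m₂ x) ∂m₁)
      - (∫ x, (llCoupling ρ f m₁ x - llCoupling ρ f m₂ x) ∂m₂)
      = ∫ z, g z * (measConv ρ m₁ z - measConv ρ m₂ z) := by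
    simp_rw [hKrep]
    rw [hF1 m₁ inferInstance, hF1 m₂ inferInstance,
      ← integral_sub (hgu m₁ hu₁int) (hgu m₂ hu₂int)]
    refine integral_congr_ae (Filter.Eventually.of_forall fun z => ?_)
    ring
  -- lower bound for the RHS
  have hgu12 : Integrable (fun z => g z * (measConv ρ m₁ z - measConv ρ m₂ z)) volume :=
    (hu₁int.sub hu₂int).bdd_mul hgm (Filter.Eventually.of_forall hgbN.choose_spec)
  have hlow : (∫ z, α * g z ^ 2) ≤ ∫ z, g z * (measConv ρ m₁ z - measConv ρ m₂ z) := by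
    refine integral_mono (hg2int.const_mul α) hgu12 fun z => ?_
    have := hkey z (measConv ρ m₁ z) (measConv ρ m₂ z)
    simpa [hgdef] using this
  -- Cauchy–Schwarz pointwise
  have hCS : ∀ x, (∫ z, ρ (x - z) * g z) ^ 2 ≤ (∫ x, ρ x) * ∫ z, ρ (x - z) * g z ^ 2 := by
    intro x
    have := weighted_cauchy_schwarz (w := fun z => ρ (x - z)) (g := g)
      (fun z => hρnn _) (hρtr x) (hsecg x) (hsecg2 x)
    rwa [hρtri' x] at this
  -- Fubini for the squared-kernel term
  have hHc : Continuous (Function.uncurry fun (x z : EuclideanSpace ℝ (Fin d)) => ρ (x - z) * g z ^ 2) :=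
    (hρc.comp (continuous_fst.sub continuous_snd)).mul ((hgcont.pow 2).comp continuous_snd)
  have hHint : Integrable (Function.uncurry fun (x z : EuclideanSpace ℝ (Fin d)) => ρ (x - z) * g z ^ 2) (volume.prod volume) := by
    rw [integrable_prod_iff' hHc.aestronglyMeasurable]
    constructor
    · filter_upwards with z
      exact Integrable.mul_const (hρtr' z) (g z ^ 2)
    · refine (hg2int.const_mul (∫ x, ρ x)).congr
        (Filter.Eventually.of_forall fun z => ?_)
      have : ∀ x, ‖ρ (x - z) * g z ^ 2‖ = ρ (x - z) * g z ^ 2 := fun x => by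
        rw [Real.norm_eq_abs, abs_mul, abs_of_nonneg (hρnn _),
          abs_of_nonneg (sq_nonneg _)]
      calc (∫ x, ρ x) * g z ^ 2 = (∫ x, ρ (x - z)) * g z ^ 2 := by rw [hρtri z]
        _ = ∫ x, ρ (x - z) * g z ^ 2 := (integral_mul_const _ _).symm
        _ = ∫ x, ‖ρ (x - z) * g z ^ 2‖ :=
          integral_congr_ae (Filter.Eventually.of_forall fun x => (this x).symm)
  have hconv2int : Integrable (fun x => ∫ z, ρ (x - z) * g z ^ 2) volume :=
    hHint.integral_prod_left
  have hconv2eq : (∫ x, ∫ z, ρ (x - z) * g z ^ 2) = (∫ x, ρ x) * ∫ z, g z ^ 2 := by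
    rw [integral_integral_swap hHint]
    calc (∫ z, ∫ x, ρ (x - z) * g z ^ 2)
        = ∫ z, (∫ x, ρ x) * g z ^ 2 := by
          refine integral_congr_ae (Filter.Eventually.of_forall fun z => ?_)
          show (∫ x, ρ (x - z) * g z ^ 2) = (∫ x, ρ x) * g z ^ 2
          rw [integral_mul_const, hρtri z]
      _ = (∫ x, ρ x) * ∫ z, g z ^ 2 := integral_const_mul _ _
  -- upper bound for the L² norm of the kernel difference
  have hup : (∫ x, (∫ z, ρ (x - z) * g z) ^ 2) ≤ (∫ x, ρ x) ^ 2 * ∫ z, g z ^ 2 := by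
    calc (∫ x, (∫ z, ρ (x - z) * g z) ^ 2)
        ≤ ∫ x, (∫ x, ρ x) * ∫ z, ρ (x - z) * g z ^ 2 := by
          refine integral_mono_of_nonneg (Filter.Eventually.of_forall fun x => sq_nonneg _)
            (hconv2int.const_mul _) (Filter.Eventually.of_forall fun x => hCS x)
      _ = (∫ x, ρ x) * ∫ x, ∫ z, ρ (x - z) * g z ^ 2 := integral_const_mul _ _
      _ = (∫ x, ρ x) * ((∫ x, ρ x) * ∫ z, g z ^ 2) := by rw [hconv2eq]
      _ = (∫ x, ρ x) ^ 2 * ∫ z, g z ^ 2 := by ring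
  -- positivity of ∫ ρ
  have hρpos : 0 < ∫ x, ρ x := by
    rw [integral_pos_iff_support_of_nonneg hρnn hρint]
    obtain ⟨x₀, hx₀⟩ := hρne
    have hopen : IsOpen (Function.support ρ) := by
      have : Function.support ρ = ρ ⁻¹' ({0}ᶜ) := rfl
      rw [this]
      exact (isOpen_compl_singleton).preimage hρc
    exact hopen.measure_pos volume ⟨x₀, hx₀⟩
  -- conclusion
  have hsq : (∫ x, (llCoupling ρ f m₁ x - llCoupling ρ f m₂ x) ^ 2)
      = ∫ x, (∫ z, ρ (x - z) * g z) ^ 2 :=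
    integral_congr_ae (Filter.Eventually.of_forall fun x => congrArg (· ^ 2) (hKrep x))
  rw [hRHS, hsq]
  calc (α / (∫ x, ρ x) ^ 2) * ∫ x, (∫ z, ρ (x - z) * g z) ^ 2
      ≤ (α / (∫ x, ρ x) ^ 2) * ((∫ x, ρ x) ^ 2 * ∫ z, g z ^ 2) := by
        refine mul_le_mul_of_nonneg_left hup (div_nonneg hα0.le (sq_nonneg _))
    _ = α * ∫ z, g z ^ 2 := by
        field_simp
    _ = ∫ z, α * g z ^ 2 := (integral_const_mul _ _).symm
    _ ≤ ∫ z, g z * (measConv ρ m₁ z - measConv ρ m₂ z) := hlow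
end

section
/- Let K ≥ 0, T > 0, and let h : [0,T] × ℝ^d → ℝ be measurable with |h(s,x)| ≤ K for all s ∈ [0,T] and x ∈ ℝ^d. Define ψ(x) := ∫_0^T ∫_{ℝ^d} Γ(x−y, s) h(s,y) dy ds. Then ψ is continuously differentiable and there exists a constant C > 0, depending only on d, such that ‖Dψ(x)‖ ≤ C K T^{1/2} for all x ∈ ℝ^d. -/
open MeasureTheory Real

/-- The heat kernel `Γ(x,t) = (4πt)^{-d/2} exp(-‖x‖²/(4t))` on `ℝ^d`. -/
noncomputable def heatKernel (d : ℕ) (x : EuclideanSpace ℝ (Fin d)) (t : ℝ) : ℝ :=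
  (4 * Real.pi * t) ^ (-(d : ℝ) / 2) * Real.exp (-‖x‖ ^ 2 / (4 * t))

namespace DuhamelAux

variable {d : ℕ}

local notation "E" => EuclideanSpace ℝ (Fin d)

lemma heatKernel_pos {x : E} {s : ℝ} (hs : 0 < s) : 0 < heatKernel d x s := by
  unfold heatKernel
  have : (0:ℝ) < 4 * Real.pi * s := by
    have := Real.pi_pos; nlinarith
  exact mul_pos (Real.rpow_pos_of_pos this _) (Real.exp_pos _)

/-- the derivative of the heat kernel in its space variable -/
noncomputable def dHK (d : ℕ) (x : EuclideanSpace ℝ (Fin d)) (s : ℝ) :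
    EuclideanSpace ℝ (Fin d) →L[ℝ] ℝ :=
  (-heatKernel d x s / (2 * s)) • innerSL ℝ x

lemma norm_dHK {s : ℝ} (hs : 0 < s) (x : E) :
    ‖dHK d x s‖ = heatKernel d x s / (2 * s) * ‖x‖ := by
  rw [dHK]
  rw [norm_smul (-heatKernel d x s / (2 * s)) (innerSL ℝ x)]
  rw [innerSL_apply_norm, Real.norm_eq_abs, abs_div, abs_neg,
    abs_of_pos (heatKernel_pos hs), abs_of_pos (by linarith : (0:ℝ) < 2 * s)]

lemma hasFDerivAt_heatKernel {s : ℝ} (hs : 0 < s) (y x : E) :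
    HasFDerivAt (fun x : E => heatKernel d (x - y) s) (dHK d (x - y) s) x := by
  have h1 : HasFDerivAt (fun x : E => x - y) (ContinuousLinearMap.id ℝ _) x :=
    (hasFDerivAt_id x).sub_const y
  have h2 := h1.norm_sq
  have h3 := (h2.const_mul (-(4 * s)⁻¹)).exp
  have h4 := h3.const_mul ((4 * Real.pi * s) ^ (-(d : ℝ) / 2))
  have heq : (fun x : E => (4 * Real.pi * s) ^ (-(d : ℝ) / 2) *
      Real.exp (-(4 * s)⁻¹ * ‖x - y‖ ^ 2)) = fun x : E => heatKernel d (x - y) s := by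
    funext z
    unfold heatKernel
    ring_nf
  rw [heq] at h4
  refine h4.congr_fderiv ?_
  ext v
  simp only [dHK, heatKernel, ContinuousLinearMap.coe_smul', Pi.smul_apply,
    ContinuousLinearMap.smul_apply, ContinuousLinearMap.coe_comp',
    Function.comp_apply, ContinuousLinearMap.coe_id', id_eq, smul_eq_mul,
    nsmul_eq_mul, Nat.cast_ofNat]
  have hs' : s ≠ 0 := ne_of_gt hs
  field_simp
  ring_nf

lemma integrable_gauss {b : ℝ} (hb : 0 < b) :
    Integrable (fun y : E => Real.exp (-b * ‖y‖ ^ 2)) := by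
  have h := (GaussianFourier.integrable_cexp_neg_mul_sq_norm_add (V := E)
      (b := (b : ℂ)) (by simpa using hb) 0 0).norm
  refine h.congr ?_
  filter_upwards with v
  simp [Complex.norm_exp]
  left; norm_cast

lemma one_add_mul_exp_le {a r : ℝ} (ha : 0 < a) (hr : 0 ≤ r) :
    (r + 1) * Real.exp (-a * r ^ 2) ≤ (2 + 2 / a) * Real.exp (-(a / 2) * r ^ 2) := by
  have h1 : r + 1 ≤ (2 + 2 / a) * Real.exp (a / 2 * r ^ 2) := by
    have e1 : a / 2 * r ^ 2 ≤ Real.exp (a / 2 * r ^ 2) := (Real.add_one_le_exp _).trans' (by linarith)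
    have e2 : (1:ℝ) ≤ Real.exp (a / 2 * r ^ 2) := Real.one_le_exp (by positivity)
    have : r ≤ 1 + r ^ 2 := by nlinarith
    have : r + 1 ≤ 2 + (2 / a) * (a / 2 * r ^ 2) := by
      have : (2 / a) * (a / 2 * r ^ 2) = r ^ 2 := by field_simp
      nlinarith
    calc r + 1 ≤ 2 + (2 / a) * (a / 2 * r ^ 2) := this
      _ ≤ 2 * Real.exp (a / 2 * r ^ 2) + (2 / a) * Real.exp (a / 2 * r ^ 2) := by
          have h2a : 0 ≤ 2 / a := by positivity
          nlinarith
      _ = (2 + 2 / a) * Real.exp (a / 2 * r ^ 2) := by ring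
  calc (r + 1) * Real.exp (-a * r ^ 2)
      ≤ ((2 + 2 / a) * Real.exp (a / 2 * r ^ 2)) * Real.exp (-a * r ^ 2) := by
        exact mul_le_mul_of_nonneg_right h1 (Real.exp_pos _).le
    _ = (2 + 2 / a) * Real.exp (-(a / 2) * r ^ 2) := by
        rw [mul_assoc, ← Real.exp_add]; ring_nf

lemma integrable_one_add_norm_gauss {b : ℝ} (hb : 0 < b) :
    Integrable (fun y : E => (‖y‖ + 1) * Real.exp (-b * ‖y‖ ^ 2)) := by
  refine Integrable.mono' ((integrable_gauss (b := b / 2) (by positivity)).const_mul (2 + 2 / b))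
    ?_ ?_
  · exact Continuous.aestronglyMeasurable (by fun_prop)
  · filter_upwards with y
    rw [Real.norm_eq_abs, abs_of_nonneg (by positivity)]
    simpa [neg_mul] using one_add_mul_exp_le hb (norm_nonneg y)

lemma integrable_norm_gauss {b : ℝ} (hb : 0 < b) :
    Integrable (fun y : E => ‖y‖ * Real.exp (-b * ‖y‖ ^ 2)) := by
  refine (integrable_one_add_norm_gauss hb).mono'
    (Continuous.aestronglyMeasurable (by fun_prop)) ?_
  filter_upwards with y
  rw [Real.norm_eq_abs, abs_of_nonneg (by positivity)]
  have := (Real.exp_pos (-b * ‖y‖ ^ 2)).le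
  nlinarith [norm_nonneg y]

lemma div_four_eq (a s : ℝ) : -a / (4 * s) = -(4 * s)⁻¹ * a := by ring

lemma integrable_gauss' {s : ℝ} (hs : 0 < s) :
    Integrable (fun y : E => Real.exp (-‖y‖ ^ 2 / (4 * s))) := by
  simp_rw [div_four_eq]
  exact integrable_gauss (by positivity)

lemma integrable_norm_gauss' {s : ℝ} (hs : 0 < s) :
    Integrable (fun y : E => ‖y‖ * Real.exp (-‖y‖ ^ 2 / (4 * s))) := by
  simp_rw [div_four_eq]
  exact integrable_norm_gauss (by positivity)

lemma integral_eq_smul_scaled (g : E → ℝ) {s : ℝ} (hs : 0 < s) :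
    ∫ y : E, g y = Real.sqrt s ^ d * ∫ z : E, g (Real.sqrt s • z) := by
  have h := MeasureTheory.Measure.integral_comp_smul (μ := volume) g (Real.sqrt s)
  rw [h, finrank_euclideanSpace, Fintype.card_fin]
  rw [abs_of_nonneg (by positivity), smul_eq_mul, ← mul_assoc, mul_inv_cancel₀ (by positivity),
    one_mul]

lemma gauss_scaled {s : ℝ} (hs : 0 < s) :
    ∫ y : E, Real.exp (-‖y‖ ^ 2 / (4 * s))
      = Real.sqrt s ^ d * ∫ z : E, Real.exp (-‖z‖ ^ 2 / 4) := by
  rw [integral_eq_smul_scaled (fun y : E => Real.exp (-‖y‖ ^ 2 / (4 * s))) hs]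
  have hs' : s ≠ 0 := hs.ne'
  have key : ∀ z : E, Real.exp (-‖Real.sqrt s • z‖ ^ 2 / (4 * s)) = Real.exp (-‖z‖ ^ 2 / 4) := by
    intro z
    congr 1
    rw [norm_smul, Real.norm_eq_abs, abs_of_nonneg (Real.sqrt_nonneg s), mul_pow,
      Real.sq_sqrt hs.le]
    field_simp
  simp_rw [key]

lemma norm_gauss_scaled {s : ℝ} (hs : 0 < s) :
    ∫ y : E, ‖y‖ * Real.exp (-‖y‖ ^ 2 / (4 * s))
      = Real.sqrt s ^ (d + 1) * ∫ z : E, ‖z‖ * Real.exp (-‖z‖ ^ 2 / 4) := by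
  rw [integral_eq_smul_scaled (fun y : E => ‖y‖ * Real.exp (-‖y‖ ^ 2 / (4 * s))) hs]
  have hs' : s ≠ 0 := hs.ne'
  have key : ∀ z : E, ‖Real.sqrt s • z‖ * Real.exp (-‖Real.sqrt s • z‖ ^ 2 / (4 * s))
      = Real.sqrt s * (‖z‖ * Real.exp (-‖z‖ ^ 2 / 4)) := by
    intro z
    rw [norm_smul, Real.norm_eq_abs, abs_of_nonneg (Real.sqrt_nonneg s), mul_pow,
      Real.sq_sqrt hs.le]
    rw [mul_assoc]
    congr 2
    field_simp
  simp_rw [key]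
  rw [integral_const_mul, pow_succ]
  ring

/-- dimensional constant for the total mass of the heat kernel -/
noncomputable def Jc (d : ℕ) : ℝ :=
  (4 * Real.pi) ^ (-(d : ℝ) / 2) * ∫ z : EuclideanSpace ℝ (Fin d), Real.exp (-‖z‖ ^ 2 / 4)

/-- dimensional constant for the total mass of the gradient of the heat kernel -/
noncomputable def Mc (d : ℕ) : ℝ :=
  (4 * Real.pi) ^ (-(d : ℝ) / 2) / 2 * ∫ z : EuclideanSpace ℝ (Fin d), ‖z‖ * Real.exp (-‖z‖ ^ 2 / 4)

lemma Jc_nonneg : 0 ≤ Jc d := by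
  refine mul_nonneg (Real.rpow_nonneg (by positivity) _) ?_
  exact integral_nonneg fun z => (Real.exp_pos _).le

lemma Mc_nonneg : 0 ≤ Mc d := by
  refine mul_nonneg (by positivity) ?_
  exact integral_nonneg fun z => by positivity

lemma sqrt_pow_eq_rpow {s : ℝ} (hs : 0 < s) (n : ℕ) :
    Real.sqrt s ^ n = s ^ ((n : ℝ) / 2) := by
  rw [Real.sqrt_eq_rpow, ← Real.rpow_natCast (s ^ ((1:ℝ)/2)) n, ← Real.rpow_mul hs.le]
  congr 1
  ring

lemma fourpis_rpow {s : ℝ} (hs : 0 < s) :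
    (4 * Real.pi * s) ^ (-(d : ℝ) / 2)
      = (4 * Real.pi) ^ (-(d : ℝ) / 2) * s ^ (-(d : ℝ) / 2) := by
  rw [Real.mul_rpow (by positivity) hs.le]

lemma integral_heatKernel {s : ℝ} (hs : 0 < s) :
    ∫ y : E, heatKernel d y s = Jc d := by
  unfold heatKernel
  rw [integral_const_mul, gauss_scaled hs, Jc, sqrt_pow_eq_rpow hs, fourpis_rpow hs]
  rw [show (4 * Real.pi) ^ (-(d : ℝ) / 2) * s ^ (-(d : ℝ) / 2)
        * (s ^ ((d : ℝ) / 2) * ∫ z : E, Real.exp (-‖z‖ ^ 2 / 4))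
      = (4 * Real.pi) ^ (-(d : ℝ) / 2) * (s ^ (-(d : ℝ) / 2) * s ^ ((d : ℝ) / 2))
        * ∫ z : E, Real.exp (-‖z‖ ^ 2 / 4) by ring]
  rw [← Real.rpow_add hs, show -(d:ℝ)/2 + (d:ℝ)/2 = 0 by ring, Real.rpow_zero, mul_one]

lemma integral_norm_dHK {s : ℝ} (hs : 0 < s) :
    ∫ y : E, ‖dHK d y s‖ = Mc d * s ^ (-(1 : ℝ) / 2) := by
  have hs' : s ≠ 0 := hs.ne'
  have key : ∀ y : E, ‖dHK d y s‖
      = (4 * Real.pi * s) ^ (-(d : ℝ) / 2) / (2 * s) * (‖y‖ * Real.exp (-‖y‖ ^ 2 / (4 * s))) := by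
    intro y
    rw [norm_dHK hs]
    unfold heatKernel
    ring
  simp_rw [key]
  rw [integral_const_mul, norm_gauss_scaled hs, sqrt_pow_eq_rpow hs, fourpis_rpow hs]
  rw [Mc]
  push_cast
  rw [show (4 * Real.pi) ^ (-(d : ℝ) / 2) * s ^ (-(d : ℝ) / 2) / (2 * s)
        * (s ^ (((d : ℝ) + 1) / 2) * ∫ z : E, ‖z‖ * Real.exp (-‖z‖ ^ 2 / 4))
      = (4 * Real.pi) ^ (-(d : ℝ) / 2) / 2
        * (s ^ (-(d : ℝ) / 2) * s ^ (((d : ℝ) + 1) / 2) * s⁻¹)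
        * ∫ z : E, ‖z‖ * Real.exp (-‖z‖ ^ 2 / 4) by field_simp]
  rw [← Real.rpow_neg_one s, ← Real.rpow_add hs, ← Real.rpow_add hs]
  rw [show -(d : ℝ) / 2 + ((d : ℝ) + 1) / 2 + -1 = -1 / 2 by ring]
  ring

lemma div_sixteen_eq (a s : ℝ) : -a / (16 * s) = -(16 * s)⁻¹ * a := by ring

lemma continuous_hk_sub (s : ℝ) (x : E) :
    Continuous fun y : E => heatKernel d (x - y) s := by
  unfold heatKernel; fun_prop

lemma heatKernel_nonneg {x : E} {s : ℝ} (hs : 0 < s) : 0 ≤ heatKernel d x s :=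
  (heatKernel_pos hs).le

lemma integrable_hk_sub {s : ℝ} (hs : 0 < s) (x : E) :
    Integrable (fun y : E => heatKernel d (x - y) s) := by
  unfold heatKernel
  exact (((integrable_gauss' hs).const_mul _).comp_sub_left x)

lemma integrable_one_add_norm_gauss'' {s : ℝ} (hs : 0 < s) (x : E) :
    Integrable (fun y : E => (‖x - y‖ + 1) * Real.exp (-‖x - y‖ ^ 2 / (16 * s))) := by
  have : Integrable (fun z : E => (‖z‖ + 1) * Real.exp (-‖z‖ ^ 2 / (16 * s))) := by
    simp_rw [div_sixteen_eq]
    exact integrable_one_add_norm_gauss (by positivity)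
  exact this.comp_sub_left x

section Fixed

variable {K : ℝ} {h : ℝ → EuclideanSpace ℝ (Fin d) → ℝ}

lemma meas_hs (hmeas : Measurable (Function.uncurry h)) (s : ℝ) : Measurable (h s) :=
  hmeas.comp measurable_prodMk_left

lemma integrable_inner_int (hmeas : Measurable (Function.uncurry h)) {s : ℝ} (hs : 0 < s)
    (hbK : ∀ y, |h s y| ≤ K) (x : E) :
    Integrable (fun y : E => heatKernel d (x - y) s * h s y) := by
  refine Integrable.mono' ((integrable_hk_sub hs x).const_mul K)
    (((continuous_hk_sub s x).measurable.mul (meas_hs hmeas s)).aestronglyMeasurable) ?_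
  filter_upwards with y
  rw [Real.norm_eq_abs, abs_mul, abs_of_nonneg (heatKernel_nonneg hs)]
  calc heatKernel d (x - y) s * |h s y| ≤ heatKernel d (x - y) s * K :=
        mul_le_mul_of_nonneg_left (hbK y) (heatKernel_nonneg hs)
    _ = K * heatKernel d (x - y) s := mul_comm _ _

/-- uniform bound for the derivative integrand over the unit ball around `x₀` -/
noncomputable def bound1 (d : ℕ) (K : ℝ) (x₀ : EuclideanSpace ℝ (Fin d)) (s : ℝ)
    (y : EuclideanSpace ℝ (Fin d)) : ℝ :=
  K * ((4 * Real.pi * s) ^ (-(d : ℝ) / 2) * Real.exp (1 / (4 * s)) / (2 * s)) *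
    ((‖x₀ - y‖ + 1) * Real.exp (-‖x₀ - y‖ ^ 2 / (16 * s)))

lemma integrable_bound1 {s : ℝ} (hs : 0 < s) (K : ℝ) (x₀ : E) :
    Integrable (bound1 d K x₀ s) :=
  (integrable_one_add_norm_gauss'' hs x₀).const_mul _

lemma bound1_spec {s : ℝ} (hs : 0 < s) (hK : 0 ≤ K) (hbK : ∀ y, |h s y| ≤ K)
    (x₀ : E) (y : E) : ∀ x ∈ Metric.ball x₀ 1,
    ‖h s y • dHK d (x - y) s‖ ≤ bound1 d K x₀ s y := by
  intro x hx
  have hxx : ‖x - x₀‖ < 1 := by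
    rw [Metric.mem_ball, dist_eq_norm] at hx; exact hx
  set r := ‖x₀ - y‖ with hr
  set ρ := ‖x - y‖ with hρ
  have hr0 : 0 ≤ r := norm_nonneg _
  have hρ0 : 0 ≤ ρ := norm_nonneg _
  have hdiff : |ρ - r| ≤ ‖x - x₀‖ := by
    have := abs_norm_sub_norm_le (x - y) (x₀ - y)
    simpa [hr, hρ] using this
  have hρle : ρ ≤ r + 1 := by
    have := abs_le.1 hdiff
    linarith [this.2]
  have hρge : r - 1 ≤ ρ := by
    have := abs_le.1 hdiff
    linarith [this.1]
  have hsq : r ^ 2 / 4 - 1 ≤ ρ ^ 2 := by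
    rcases le_or_gt r 2 with h2 | h2
    · nlinarith
    · nlinarith
  have hexp : Real.exp (-ρ ^ 2 / (4 * s)) ≤
      Real.exp (1 / (4 * s)) * Real.exp (-r ^ 2 / (16 * s)) := by
    rw [← Real.exp_add]
    apply Real.exp_le_exp.2
    have hs' : s ≠ 0 := hs.ne'
    have e : 1 / (4 * s) + -r ^ 2 / (16 * s) = (1 - r ^ 2 / 4) / (4 * s) := by
      field_simp; ring
    rw [e]
    exact (div_le_div_iff_of_pos_right (show (0:ℝ) < 4 * s by linarith)).2 (by linarith)
  have hnorm : ‖h s y • dHK d (x - y) s‖ = |h s y| * ‖dHK d (x - y) s‖ := by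
    rw [norm_smul (h s y) (dHK d (x - y) s), Real.norm_eq_abs]
  rw [hnorm, norm_dHK hs]
  unfold heatKernel bound1
  have hc : (0:ℝ) ≤ (4 * Real.pi * s) ^ (-(d : ℝ) / 2) := Real.rpow_nonneg (by positivity) _
  have step1 : |h s y| * ((4 * Real.pi * s) ^ (-(d : ℝ) / 2) * Real.exp (-ρ ^ 2 / (4 * s))
      / (2 * s) * ρ) ≤ K * ((4 * Real.pi * s) ^ (-(d : ℝ) / 2) * Real.exp (-ρ ^ 2 / (4 * s))
      / (2 * s) * ρ) := by
    apply mul_le_mul_of_nonneg_right (hbK y)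
    positivity
  refine step1.trans ?_
  have step2 : Real.exp (-ρ ^ 2 / (4 * s)) * ρ ≤
      (Real.exp (1 / (4 * s)) * Real.exp (-r ^ 2 / (16 * s))) * (r + 1) := by
    apply mul_le_mul hexp hρle hρ0 (by positivity)
  calc K * ((4 * Real.pi * s) ^ (-(d : ℝ) / 2) * Real.exp (-ρ ^ 2 / (4 * s)) / (2 * s) * ρ)
      = K * ((4 * Real.pi * s) ^ (-(d : ℝ) / 2) / (2 * s)) * (Real.exp (-ρ ^ 2 / (4 * s)) * ρ) := by
        ring
    _ ≤ K * ((4 * Real.pi * s) ^ (-(d : ℝ) / 2) / (2 * s)) *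
        ((Real.exp (1 / (4 * s)) * Real.exp (-r ^ 2 / (16 * s))) * (r + 1)) := by
        apply mul_le_mul_of_nonneg_left step2
        positivity
    _ = K * ((4 * Real.pi * s) ^ (-(d : ℝ) / 2) * Real.exp (1 / (4 * s)) / (2 * s)) *
        ((r + 1) * Real.exp (-r ^ 2 / (16 * s))) := by ring

end Fixed

lemma continuous_dHK_comp {s : ℝ} {f : EuclideanSpace ℝ (Fin d) → EuclideanSpace ℝ (Fin d)}
    (hf : Continuous f) : Continuous fun w => dHK d (f w) s := by
  unfold dHK heatKernel
  apply Continuous.fun_smul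
  · fun_prop
  · exact (innerSL ℝ).continuous.comp hf

section Fixed2

variable {K : ℝ} {h : ℝ → EuclideanSpace ℝ (Fin d) → ℝ}

lemma aesm_vInt (hmeas : Measurable (Function.uncurry h)) (s : ℝ) (x : E) :
    AEStronglyMeasurable (fun y : E => h s y • dHK d (x - y) s) volume :=
  ((meas_hs hmeas s).aestronglyMeasurable).smul
    ((continuous_dHK_comp (continuous_const.sub continuous_id)).aestronglyMeasurable)

lemma integrable_norm_dHK_sub {s : ℝ} (hs : 0 < s) (x : E) :
    Integrable (fun y : E => ‖dHK d (x - y) s‖) := by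
  have key : ∀ z : E, ‖dHK d z s‖
      = (4 * Real.pi * s) ^ (-(d : ℝ) / 2) / (2 * s)
        * (‖z‖ * Real.exp (-‖z‖ ^ 2 / (4 * s))) := by
    intro z
    rw [norm_dHK hs]
    unfold heatKernel
    ring
  have h1 : Integrable (fun z : E => ‖dHK d z s‖) :=
    (((integrable_norm_gauss' hs).const_mul _)).congr (ae_of_all _ fun z => (key z).symm)
  exact h1.comp_sub_left x

lemma integral_norm_dHK_sub {s : ℝ} (hs : 0 < s) (x : E) :
    ∫ y : E, ‖dHK d (x - y) s‖ = Mc d * s ^ (-(1 : ℝ) / 2) := by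
  rw [integral_sub_left_eq_self (fun z : E => ‖dHK d z s‖) volume x]
  exact integral_norm_dHK hs

lemma integrable_vInt (hmeas : Measurable (Function.uncurry h)) {s : ℝ} (hs : 0 < s)
    (hbK : ∀ y, |h s y| ≤ K) (x : E) :
    Integrable (fun y : E => h s y • dHK d (x - y) s) := by
  refine Integrable.mono' ((integrable_norm_dHK_sub hs x).const_mul K)
    (aesm_vInt hmeas s x) ?_
  filter_upwards with y
  rw [norm_smul (h s y) (dHK d (x - y) s), Real.norm_eq_abs]
  exact mul_le_mul_of_nonneg_right (hbK y) (norm_nonneg _)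

lemma norm_v_le (hmeas : Measurable (Function.uncurry h)) {s : ℝ} (hs : 0 < s)
    (hbK : ∀ y, |h s y| ≤ K) (x : E) :
    ‖∫ y : E, h s y • dHK d (x - y) s‖ ≤ K * (Mc d * s ^ (-(1 : ℝ) / 2)) := by
  refine (norm_integral_le_of_norm_le ((integrable_norm_dHK_sub hs x).const_mul K) ?_).trans ?_
  · filter_upwards with y
    rw [norm_smul (h s y) (dHK d (x - y) s), Real.norm_eq_abs]
    exact mul_le_mul_of_nonneg_right (hbK y) (norm_nonneg _)
  · rw [integral_const_mul, integral_norm_dHK_sub hs x]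

lemma hasFDerivAt_inner (hmeas : Measurable (Function.uncurry h)) {s : ℝ} (hs : 0 < s)
    (hK : 0 ≤ K) (hbK : ∀ y, |h s y| ≤ K) (x₀ : E) :
    HasFDerivAt (fun x : E => ∫ y : E, heatKernel d (x - y) s * h s y)
      (∫ y : E, h s y • dHK d (x₀ - y) s) x₀ := by
  apply hasFDerivAt_integral_of_dominated_of_fderiv_le
    (F' := fun (x : E) (y : E) => h s y • dHK d (x - y) s) (bound := bound1 d K x₀ s)
    (s := Metric.ball x₀ 1) (Metric.ball_mem_nhds x₀ one_pos)
  · exact Filter.Eventually.of_forall fun x =>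
      (((continuous_hk_sub s x).measurable.mul (meas_hs hmeas s)).aestronglyMeasurable)
  · exact integrable_inner_int hmeas hs hbK x₀
  · exact aesm_vInt hmeas s x₀
  · exact ae_of_all _ fun y x hx => bound1_spec hs hK hbK x₀ y x hx
  · exact integrable_bound1 hs K x₀
  · exact ae_of_all _ fun y x _ => (hasFDerivAt_heatKernel hs y x).mul_const (h s y)

lemma continuous_v (hmeas : Measurable (Function.uncurry h)) {s : ℝ} (hs : 0 < s)
    (hK : 0 ≤ K) (hbK : ∀ y, |h s y| ≤ K) :
    Continuous fun x : E => ∫ y : E, h s y • dHK d (x - y) s := by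
  rw [continuous_iff_continuousAt]
  intro x₀
  apply continuousAt_of_dominated (bound := bound1 d K x₀ s)
  · exact Filter.Eventually.of_forall fun x => aesm_vInt hmeas s x
  · filter_upwards [Metric.ball_mem_nhds x₀ one_pos] with x hx
    exact ae_of_all _ fun y => bound1_spec hs hK hbK x₀ y x hx
  · exact integrable_bound1 hs K x₀
  · refine ae_of_all _ fun y => ?_
    exact ((continuous_const.fun_smul
      (continuous_dHK_comp (continuous_id.sub continuous_const)))).continuousAt

end Fixed2

section Layer2

variable {K T : ℝ} {h : ℝ → EuclideanSpace ℝ (Fin d) → ℝ}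

lemma hk_prod_meas (x : E) : Measurable fun p : ℝ × E => heatKernel d (x - p.2) p.1 := by
  unfold heatKernel
  measurability

lemma aesm_u (hmeas : Measurable (Function.uncurry h)) (x : E) :
    AEStronglyMeasurable (fun s => ∫ y : E, heatKernel d (x - y) s * h s y)
      (volume.restrict (Set.Ioc (0:ℝ) T)) := by
  have hm : StronglyMeasurable (Function.uncurry fun s (y : E) => heatKernel d (x - y) s * h s y) := by
    apply Measurable.stronglyMeasurable
    show Measurable fun p : ℝ × E => heatKernel d (x - p.2) p.1 * h p.1 p.2
    exact (hk_prod_meas x).mul hmeas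
  exact hm.integral_prod_right.aestronglyMeasurable.restrict

lemma aesm_v (hmeas : Measurable (Function.uncurry h)) (x : E) :
    AEStronglyMeasurable (fun s => ∫ y : E, h s y • dHK d (x - y) s)
      (volume.restrict (Set.Ioc (0:ℝ) T)) := by
  have hm : StronglyMeasurable (Function.uncurry fun s (y : E) => h s y • dHK d (x - y) s) := by
    have key : (Function.uncurry fun s (y : E) => h s y • dHK d (x - y) s)
        = fun p : ℝ × E => (h p.1 p.2 * (-heatKernel d (x - p.2) p.1 / (2 * p.1)))
            • innerSL ℝ (x - p.2) := by
      funext p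
      show h p.1 p.2 • dHK d (x - p.2) p.1 = _
      rw [dHK, smul_smul]
    rw [key]
    refine StronglyMeasurable.fun_smul (Measurable.stronglyMeasurable ?_)
      (Continuous.stronglyMeasurable ?_)
    · exact hmeas.mul (((hk_prod_meas x).neg).div (measurable_const.mul measurable_fst))
    · exact (innerSL ℝ).continuous.comp (continuous_const.sub continuous_snd)
  exact hm.integral_prod_right.aestronglyMeasurable.restrict

lemma integral_hk_sub {s : ℝ} (hs : 0 < s) (x : E) :
    ∫ y : E, heatKernel d (x - y) s = Jc d := by
  rw [integral_sub_left_eq_self (fun z : E => heatKernel d z s) volume x]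
  exact integral_heatKernel hs

lemma norm_u_le (hmeas : Measurable (Function.uncurry h)) {s : ℝ} (hs : 0 < s)
    (hbK : ∀ y, |h s y| ≤ K) (x : E) :
    ‖∫ y : E, heatKernel d (x - y) s * h s y‖ ≤ K * Jc d := by
  refine (norm_integral_le_of_norm_le ((integrable_hk_sub hs x).const_mul K) ?_).trans ?_
  · filter_upwards with y
    rw [Real.norm_eq_abs, abs_mul, abs_of_nonneg (heatKernel_nonneg hs)]
    calc heatKernel d (x - y) s * |h s y| ≤ heatKernel d (x - y) s * K :=
          mul_le_mul_of_nonneg_left (hbK y) (heatKernel_nonneg hs)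
      _ = K * heatKernel d (x - y) s := mul_comm _ _
  · rw [integral_const_mul, integral_hk_sub hs x]

lemma integrable_u (hmeas : Measurable (Function.uncurry h)) (hT : 0 < T) (hK : 0 ≤ K)
    (hb : ∀ s ∈ Set.Icc (0:ℝ) T, ∀ y, |h s y| ≤ K) (x : E) :
    Integrable (fun s => ∫ y : E, heatKernel d (x - y) s * h s y)
      (volume.restrict (Set.Ioc (0:ℝ) T)) := by
  refine Integrable.mono' (integrable_const (K * Jc d)) (aesm_u hmeas x) ?_
  rw [ae_restrict_iff' measurableSet_Ioc]
  refine ae_of_all _ fun s hs => ?_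
  exact norm_u_le hmeas hs.1 (hb s ⟨hs.1.le, hs.2⟩) x

lemma integrable_bound2 (hT : 0 < T) (K M : ℝ) :
    Integrable (fun s => K * (M * s ^ (-(1:ℝ) / 2)))
      (volume.restrict (Set.Ioc (0:ℝ) T)) := by
  have h1 : IntegrableOn (fun s : ℝ => s ^ (-(1:ℝ) / 2)) (Set.Ioc (0:ℝ) T) := by
    have := intervalIntegral.intervalIntegrable_rpow' (a := 0) (b := T) (r := -(1:ℝ)/2) (by norm_num)
    rwa [intervalIntegrable_iff_integrableOn_Ioc_of_le hT.le] at this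
  simpa [mul_assoc] using (h1.const_mul (K * M)).congr (ae_of_all _ fun s => by ring)

lemma integral_bound2 (hT : 0 < T) (K M : ℝ) :
    ∫ s in Set.Ioc (0:ℝ) T, K * (M * s ^ (-(1:ℝ) / 2))
      = K * M * (2 * T ^ ((1:ℝ) / 2)) := by
  rw [show (fun s : ℝ => K * (M * s ^ (-(1:ℝ) / 2))) = fun s : ℝ => (K * M) * s ^ (-(1:ℝ)/2) by
    funext s; ring]
  rw [integral_const_mul, ← intervalIntegral.integral_of_le hT.le,
    integral_rpow (Or.inl (by norm_num))]
  rw [Real.zero_rpow (by norm_num), show -(1:ℝ)/2 + 1 = 1/2 by norm_num]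
  ring

end Layer2

end DuhamelAux

open DuhamelAux

/-- There is a constant `C > 0`, depending only on `d`, such that for every bounded source
`h` with `|h| ≤ K`, the Duhamel potential `ψ(x) = ∫₀ᵀ ∫ Γ(x-y,s) h(s,y) dy ds` is `C¹` with
`‖Dψ(x)‖ ≤ C K T^{1/2}`. -/
theorem duhamel_first_derivative_bound (d : ℕ) :
    ∃ C > (0 : ℝ), ∀ (K T : ℝ) (h : ℝ → EuclideanSpace ℝ (Fin d) → ℝ),
      0 ≤ K → 0 < T →
      Measurable (Function.uncurry h) →
      (∀ s ∈ Set.Icc (0 : ℝ) T, ∀ x, |h s x| ≤ K) →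
      ContDiff ℝ 1 (fun x : EuclideanSpace ℝ (Fin d) =>
          ∫ s in Set.Ioc (0 : ℝ) T, ∫ y, heatKernel d (x - y) s * h s y) ∧
      ∀ x : EuclideanSpace ℝ (Fin d),
        ‖fderiv ℝ (fun x : EuclideanSpace ℝ (Fin d) =>
            ∫ s in Set.Ioc (0 : ℝ) T, ∫ y, heatKernel d (x - y) s * h s y) x‖
          ≤ C * K * T ^ ((1 : ℝ) / 2) := by
  refine ⟨2 * Mc d + 1, by linarith [Mc_nonneg (d := d)], ?_⟩
  intro K T h hK hT hmeas hb
  have hbIoc : ∀ s ∈ Set.Ioc (0:ℝ) T, ∀ y, |h s y| ≤ K :=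
    fun s hs => hb s ⟨hs.1.le, hs.2⟩
  have HFD : ∀ x₀ : EuclideanSpace ℝ (Fin d),
      HasFDerivAt (fun x : EuclideanSpace ℝ (Fin d) =>
        ∫ s in Set.Ioc (0 : ℝ) T, ∫ y, heatKernel d (x - y) s * h s y)
      (∫ s in Set.Ioc (0:ℝ) T, ∫ y, h s y • dHK d (x₀ - y) s) x₀ := by
    intro x₀
    apply hasFDerivAt_integral_of_dominated_of_fderiv_le
      (F' := fun x s => ∫ y, h s y • dHK d (x - y) s)
      (bound := fun s => K * (Mc d * s ^ (-(1 : ℝ) / 2))) (s := Metric.ball x₀ 1) (Metric.ball_mem_nhds x₀ one_pos)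
    · exact Filter.Eventually.of_forall fun x => aesm_u hmeas x
    · exact integrable_u hmeas hT hK hb x₀
    · exact aesm_v hmeas x₀
    · rw [ae_restrict_iff' measurableSet_Ioc]
      exact ae_of_all _ fun s hs x _ => norm_v_le hmeas hs.1 (hbIoc s hs) x
    · exact integrable_bound2 hT K _
    · rw [ae_restrict_iff' measurableSet_Ioc]
      exact ae_of_all _ fun s hs x _ => hasFDerivAt_inner hmeas hs.1 hK (hbIoc s hs) x
  have hfder : ∀ x : EuclideanSpace ℝ (Fin d),
      fderiv ℝ (fun x : EuclideanSpace ℝ (Fin d) =>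
        ∫ s in Set.Ioc (0 : ℝ) T, ∫ y, heatKernel d (x - y) s * h s y) x
      = ∫ s in Set.Ioc (0:ℝ) T, ∫ y, h s y • dHK d (x - y) s :=
    fun x => (HFD x).fderiv
  constructor
  · rw [contDiff_one_iff_fderiv]
    refine ⟨fun x => (HFD x).differentiableAt, ?_⟩
    rw [funext hfder]
    apply continuous_of_dominated (bound := fun s => K * (Mc d * s ^ (-(1 : ℝ) / 2)))
    · exact fun x => aesm_v hmeas x
    · intro x
      rw [ae_restrict_iff' measurableSet_Ioc]
      exact ae_of_all _ fun s hs => norm_v_le hmeas hs.1 (hbIoc s hs) x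
    · exact integrable_bound2 hT K _
    · rw [ae_restrict_iff' measurableSet_Ioc]
      exact ae_of_all _ fun s hs => continuous_v hmeas hs.1 hK (hbIoc s hs)
  · intro x
    rw [hfder x]
    have hb1 : ‖∫ s in Set.Ioc (0:ℝ) T, ∫ y, h s y • dHK d (x - y) s‖
        ≤ ∫ s in Set.Ioc (0:ℝ) T, K * (Mc d * s ^ (-(1 : ℝ) / 2)) := by
      refine norm_integral_le_of_norm_le (integrable_bound2 hT K _) ?_
      rw [ae_restrict_iff' measurableSet_Ioc]
      exact ae_of_all _ fun s hs => norm_v_le hmeas hs.1 (hbIoc s hs) x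
    refine hb1.trans ?_
    rw [integral_bound2 hT K (Mc d)]
    have hT2 : (0:ℝ) ≤ T ^ ((1:ℝ)/2) := Real.rpow_nonneg hT.le _
    have hM := Mc_nonneg (d := d)
    nlinarith
end
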